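/- Let f : 𝕋 → ℂ be a 2π-periodic function of class C^{ν,α} (i.e., ν times continuously differentiable with ν-th derivative Hölder of order α, 0 ≤ α ≤ 1, ν + α > 0). Then for every n = 1, 2, ..., the sum of |f̂(k)|² over integers k with 2^{n-1} ≤ |k| < 2^n is at most c ‖f‖²_{C^{ν,α}} 2^{-2n(ν+α)}, where c > 0 depends only on ν and α, ‖f‖_{C^{ν,α}} is the sum of the sup norms of f and its derivatives up to order ν plus the α-Hölder seminorm of the ν-th derivative, and f̂(k) = (1/2π)∫_𝕋 f(t)e^{-ikt}dt. -/

import Mathlib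

open MeasureTheory Real
open AddCircle

noncomputable section

/-- The `k`-th Fourier coefficient of a `2π`-periodic function `f : ℝ → ℂ`:
`f̂(k) = (1/2π) ∫_0^{2π} f(t) e^{-ikt} dt`. -/
def fourierCoef1 (f : ℝ → ℂ) (k : ℤ) : ℂ :=
  (1 / (2 * π) : ℝ) * ∫ t in (0 : ℝ)..(2 * π), f t * Complex.exp (-Complex.I * k * t)

-- basic facts about the exponential e_k(t) = exp(-I k t)
lemma expk_hasDerivAt (c : ℂ) (t : ℝ) :
    HasDerivAt (fun s : ℝ => Complex.exp (c * s)) (c * Complex.exp (c * t)) t := by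
  have h : HasDerivAt (fun z : ℂ => Complex.exp (c * z)) (c * Complex.exp (c * t)) (t : ℂ) := by
    have := ((hasDerivAt_id (t : ℂ)).const_mul c).cexp
    simpa [mul_comm] using this
  simpa using h.comp_ofReal

lemma expk_periodic (k : ℤ) :
    Function.Periodic (fun t : ℝ => Complex.exp (-Complex.I * k * t)) (2 * π) := by
  intro t
  simp only [Complex.ofReal_add, Complex.ofReal_mul, Complex.ofReal_ofNat, mul_add]
  rw [Complex.exp_add]
  have : Complex.exp (-Complex.I * k * (2 * (π : ℂ))) = 1 := by
    rw [← Complex.exp_int_mul_two_pi_mul_I (-k)]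
    congr 1
    push_cast
    ring
  rw [this, mul_one]

lemma periodic_deriv {f : ℝ → ℂ} (hf : Function.Periodic f (2 * π)) :
    Function.Periodic (deriv f) (2 * π) := by
  intro t
  rw [← deriv_comp_add_const f (2 * π) t]
  congr 1
  ext y
  exact hf y

lemma integrable_mul_expk {g : ℝ → ℂ} (hg : Continuous g) (c : ℂ) :
    IntervalIntegrable (fun t => g t * Complex.exp (c * t)) volume 0 (2 * π) :=
  (hg.mul (Complex.continuous_exp.comp (by continuity))).intervalIntegrable _ _

lemma fourierCoef1_deriv {f : ℝ → ℂ} (hf : Differentiable ℝ f)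
    (hf' : Continuous (deriv f)) (hp : Function.Periodic f (2 * π)) (k : ℤ) :
    fourierCoef1 (deriv f) k = (Complex.I * k) * fourierCoef1 f k := by
  have hfc : Continuous f := hf.continuous
  set c : ℂ := -Complex.I * k with hc
  have key : ∫ t in (0:ℝ)..(2*π), (deriv f t * Complex.exp (c * t)
      + f t * (c * Complex.exp (c * t)))
      = f (2*π) * Complex.exp (c * ((2*π : ℝ) : ℂ)) - f 0 * Complex.exp (c * ((0:ℝ) : ℂ)) := by
    have hcont : Continuous fun t : ℝ => (c * Complex.exp (c * t)) :=
      continuous_const.mul (Complex.continuous_exp.comp (by continuity))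
    exact intervalIntegral.integral_deriv_mul_eq_sub (u := f)
      (v := fun t : ℝ => Complex.exp (c * t)) (u' := deriv f)
      (v' := fun t : ℝ => c * Complex.exp (c * t))
      (fun x _ => (hf x).hasDerivAt) (fun x _ => expk_hasDerivAt c x)
      (hf'.intervalIntegrable _ _) (hcont.intervalIntegrable _ _)
  have hend : f (2*π) * Complex.exp (c * ((2*π : ℝ) : ℂ)) - f 0 * Complex.exp (c * ((0:ℝ) : ℂ)) = 0 := by
    have h1 : f (2*π) = f 0 := by simpa using (hp 0)
    have h2 : Complex.exp (c * ((2*π : ℝ) : ℂ)) = 1 := by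
      rw [← Complex.exp_int_mul_two_pi_mul_I (-k)]
      congr 1
      rw [hc]
      push_cast
      ring
    rw [h1, h2]
    simp
  rw [hend] at key
  have hsplit : ∫ t in (0:ℝ)..(2*π), (deriv f t * Complex.exp (c * t)
      + f t * (c * Complex.exp (c * t)))
      = (∫ t in (0:ℝ)..(2*π), deriv f t * Complex.exp (c * t))
      + c * ∫ t in (0:ℝ)..(2*π), f t * Complex.exp (c * t) := by
    have hfun : (fun t : ℝ => f t * (c * Complex.exp (c * t)))
        = fun t : ℝ => c * (f t * Complex.exp (c * t)) := by funext t; ring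
    rw [intervalIntegral.integral_add (integrable_mul_expk hf' c)
      (by rw [hfun]; exact (integrable_mul_expk hfc c).const_mul c)]
    congr 1
    rw [hfun, intervalIntegral.integral_const_mul]
  rw [hsplit] at key
  have hA : (∫ t in (0:ℝ)..(2*π), deriv f t * Complex.exp (-Complex.I * k * t))
      = (Complex.I * k) * ∫ t in (0:ℝ)..(2*π), f t * Complex.exp (-Complex.I * k * t) := by
    rw [← hc]
    linear_combination key
  unfold fourierCoef1
  rw [hA]
  ring

lemma periodic_iteratedDeriv {f : ℝ → ℂ} (hp : Function.Periodic f (2 * π)) (m : ℕ) :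
    Function.Periodic (iteratedDeriv m f) (2 * π) := by
  induction m with
  | zero => simpa using hp
  | succ m ih => rw [iteratedDeriv_succ]; exact periodic_deriv ih

lemma fourierCoef1_iteratedDeriv {f : ℝ → ℂ} {ν : ℕ} (hf : ContDiff ℝ ν f)
    (hp : Function.Periodic f (2 * π)) (k : ℤ) :
    ∀ m ≤ ν, fourierCoef1 (iteratedDeriv m f) k = (Complex.I * k) ^ m * fourierCoef1 f k := by
  intro m hm
  induction m with
  | zero => simp
  | succ m ih =>
    have hm' : m ≤ ν := Nat.le_of_succ_le hm
    have h1 : ContDiff ℝ 1 (iteratedDeriv m f) := by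
      rw [iteratedDeriv_eq_iterate]
      refine ContDiff.iterate_deriv' 1 m (hf.of_le ?_)
      have h2 : (1 + m : ℕ) ≤ ν := by omega
      exact_mod_cast Nat.cast_le.mpr h2
    rw [iteratedDeriv_succ,
      fourierCoef1_deriv (h1.differentiable one_ne_zero) (h1.continuous_deriv le_rfl)
        (periodic_iteratedDeriv hp m) k, ih hm']
    ring

lemma fourierCoef1_translate {g : ℝ → ℂ} (hp : Function.Periodic g (2 * π)) (h : ℝ) (k : ℤ) :
    fourierCoef1 (fun t => g (t + h)) k = Complex.exp (Complex.I * k * h) * fourierCoef1 g k := by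
  set G : ℝ → ℂ := fun s => g s * Complex.exp (-Complex.I * k * s) with hG
  have hGper : Function.Periodic G (2 * π) := hp.mul (expk_periodic k)
  have step1 : (fun t : ℝ => g (t + h) * Complex.exp (-Complex.I * k * t))
      = fun t : ℝ => Complex.exp (Complex.I * k * h) * G (t + h) := by
    funext t
    rw [hG]
    simp only []
    rw [mul_left_comm, ← Complex.exp_add]
    congr 2
    push_cast
    ring
  unfold fourierCoef1
  rw [step1, intervalIntegral.integral_const_mul]
  have step2 : (∫ t in (0:ℝ)..(2*π), G (t + h)) = ∫ t in (0:ℝ)..(2*π), G t := by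
    rw [intervalIntegral.integral_comp_add_right]
    have := hGper.intervalIntegral_add_eq h 0
    simpa [zero_add, add_comm] using this
  rw [step2]
  ring

lemma bessel_ineq {g : ℝ → ℂ} (hg : Continuous g) (hp : Function.Periodic g (2 * π))
    (S : Finset ℤ) :
    ∑ k ∈ S, ‖fourierCoef1 g k‖ ^ 2
      ≤ (1 / (2 * π)) * ∫ t in (0:ℝ)..(2 * π), ‖g t‖ ^ 2 := by
  have hT : Fact (0 < 2 * π) := ⟨by positivity⟩
  -- the lift of g to the circle
  have hFc : Continuous (hp.lift : AddCircle (2 * π) → ℂ) := by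
    rw [isQuotientMap_quotient_mk'.continuous_iff]
    exact hg
  set F : C(AddCircle (2 * π), ℂ) := ⟨hp.lift, hFc⟩ with hF
  have hFcoe : ∀ x : ℝ, F (x : AddCircle (2 * π)) = g x := fun x => hp.lift_coe x
  -- identification of coefficients
  have hcoef : ∀ k : ℤ, fourierCoef1 g k = fourierCoeff (F : AddCircle (2 * π) → ℂ) k := by
    intro k
    rw [fourierCoeff_eq_intervalIntegral _ k 0, zero_add]
    have hint : (∫ x in (0:ℝ)..(2*π),
          fourier (-k) (x : AddCircle (2*π)) • F (x : AddCircle (2*π)))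
        = ∫ t in (0:ℝ)..(2*π), g t * Complex.exp (-Complex.I * k * t) := by
      apply intervalIntegral.integral_congr
      intro x _
      show (fourier (-k)) (x : AddCircle (2*π)) • F (x : AddCircle (2*π))
          = g x * Complex.exp (-Complex.I * k * x)
      rw [hFcoe x, smul_eq_mul, mul_comm]
      congr 1
      rw [fourier_coe_apply]
      congr 1
      have hπ : (π : ℂ) ≠ 0 := Complex.ofReal_ne_zero.mpr pi_ne_zero
      push_cast
      field_simp
    rw [hint]
    unfold fourierCoef1
    rw [Complex.real_smul]
  -- pass to L², use Parseval/Bessel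
  set L := ContinuousMap.toLp (E := ℂ) 2 haarAddCircle ℂ F with hL
  have hcoefL : ∀ k : ℤ, fourierCoeff (L : AddCircle (2 * π) → ℂ) k
      = fourierCoeff (F : AddCircle (2 * π) → ℂ) k := fun k => fourierCoeff_toLp F k
  have hsummable : Summable fun i : ℤ => ‖fourierCoeff (L : AddCircle (2 * π) → ℂ) i‖ ^ 2 := by
    have h1 : ∀ i : ℤ, fourierCoeff (L : AddCircle (2 * π) → ℂ) i = fourierBasis.repr L i :=
      fun i => (fourierBasis_repr L i).symm
    simp_rw [h1]
    have h2 := lp.memℓp (fourierBasis.repr L)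
    rw [memℓp_gen_iff (by norm_num)] at h2
    have h3 : ∀ i : ℤ, ‖fourierBasis.repr L i‖ ^ ((2 : ENNReal).toReal)
        = ‖fourierBasis.repr L i‖ ^ 2 := by
      intro i
      rw [show ((2 : ENNReal).toReal) = ((2 : ℕ) : ℝ) by norm_num, Real.rpow_natCast]
    simpa [h3] using h2
  have hsum_le : ∑ k ∈ S, ‖fourierCoef1 g k‖ ^ 2
      ≤ ∑' i : ℤ, ‖fourierCoeff (L : AddCircle (2 * π) → ℂ) i‖ ^ 2 := by
    simp_rw [hcoef, ← hcoefL]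
    exact Summable.sum_le_tsum S (fun i _ => by positivity) hsummable
  rw [tsum_sq_fourierCoeff L] at hsum_le
  refine hsum_le.trans (le_of_eq ?_)
  have hae : (L : AddCircle (2 * π) → ℂ) =ᵐ[haarAddCircle] F := ContinuousMap.coeFn_toLp _ F
  rw [show (∫ t : AddCircle (2 * π), ‖(L : AddCircle (2 * π) → ℂ) t‖ ^ 2 ∂haarAddCircle)
      = ∫ t : AddCircle (2 * π), ‖F t‖ ^ 2 ∂haarAddCircle from
    integral_congr_ae (hae.mono fun x hx => by simp only [hx])]
  have hiv := AddCircle.intervalIntegral_preimage (2 * π) 0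
    (fun z : AddCircle (2 * π) => ‖F z‖ ^ 2)
  rw [zero_add] at hiv
  have hvol : ∫ b : AddCircle (2 * π), ‖F b‖ ^ 2
      = (2 * π) * ∫ b : AddCircle (2 * π), ‖F b‖ ^ 2 ∂haarAddCircle := by
    rw [volume_eq_smul_haarAddCircle, integral_smul_measure,
      ENNReal.toReal_ofReal (by positivity), smul_eq_mul]
  have hg2 : (∫ t in (0:ℝ)..(2*π), ‖F (t : AddCircle (2 * π))‖ ^ 2)
      = ∫ t in (0:ℝ)..(2*π), ‖g t‖ ^ 2 := by
    apply intervalIntegral.integral_congr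
    intro x _
    show ‖F (x : AddCircle (2*π))‖ ^ 2 = ‖g x‖ ^ 2
    rw [hFcoe x]
  rw [← hg2, hiv, hvol]
  have h2π : (2 * π) ≠ 0 := by positivity
  field_simp

lemma exp_sub_one_sq_lb (θ : ℝ) (h1 : π / 2 ≤ |θ|) (h2 : |θ| ≤ π + π / 2) :
    2 ≤ ‖Complex.exp ((θ : ℂ) * Complex.I) - 1‖ ^ 2 := by
  have hexp : Complex.exp ((θ : ℂ) * Complex.I) - 1
      = ((Real.cos θ - 1 : ℝ) : ℂ) + ((Real.sin θ : ℝ) : ℂ) * Complex.I := by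
    rw [Complex.exp_mul_I, ← Complex.ofReal_cos, ← Complex.ofReal_sin]
    push_cast
    ring
  rw [hexp]
  have : ‖((Real.cos θ - 1 : ℝ) : ℂ) + ((Real.sin θ : ℝ) : ℂ) * Complex.I‖ ^ 2
      = (Real.cos θ - 1) ^ 2 + Real.sin θ ^ 2 := by
    rw [Complex.sq_norm, Complex.normSq_add_mul_I]
  rw [this]
  have hcos : Real.cos θ ≤ 0 := by
    rw [← Real.cos_abs]
    exact Real.cos_nonpos_of_pi_div_two_le_of_le h1 h2
  nlinarith [Real.sin_sq_add_cos_sq θ]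

/-- Let `f : 𝕋 → ℂ` be `2π`-periodic of class `C^{ν,α}` (`ν` times continuously
differentiable with ν-th derivative α-Hölder, `0 ≤ α ≤ 1`, `ν + α > 0`), with `M`
a bound for the `C^{ν,α}` norm (sup norms of derivatives up to order `ν` and the
α-Hölder seminorm of the ν-th derivative). Then for every `n ≥ 1`,
`∑_{2^{n-1} ≤ |k| < 2^n} |f̂(k)|² ≤ c M² 2^{-2n(ν+α)}`, with `c = c(ν, α) > 0`. -/
theorem stmt1 (ν : ℕ) (α : ℝ) (hα0 : 0 ≤ α) (hα1 : α ≤ 1)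
    (hpos : 0 < (ν : ℝ) + α) :
    ∃ c : ℝ, 0 < c ∧
      ∀ (f : ℝ → ℂ) (M : ℝ),
        Function.Periodic f (2 * π) →
        ContDiff ℝ ν f →
        (∀ i ≤ ν, ∀ t : ℝ, ‖iteratedDeriv i f t‖ ≤ M) →
        (∀ s t : ℝ, ‖iteratedDeriv ν f s - iteratedDeriv ν f t‖ ≤ M * |s - t| ^ α) →
        ∀ n : ℕ, 1 ≤ n →
          ∑ k ∈ (Finset.Icc (-(2 ^ n : ℤ)) (2 ^ n)).filter
              (fun k => 2 ^ (n - 1) ≤ |k| ∧ |k| < 2 ^ n),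
            ‖fourierCoef1 f k‖ ^ 2
            ≤ c * M ^ 2 * ((2 : ℝ) ^ n) ^ (-(2 * ((ν : ℝ) + α))) := by
  refine ⟨(π ^ α) ^ 2 * ((2 : ℝ) ^ ν) ^ 2 / 2, by positivity, ?_⟩
  intro f M hp hf hM hHol n hn
  set A : ℝ := (2 : ℝ) ^ n with hAdef
  have hA : (0 : ℝ) < A := by positivity
  set h : ℝ := π / A with hhdef
  have hh : 0 < h := by positivity
  set φ : ℝ → ℂ := iteratedDeriv ν f with hφdef
  have hφc : Continuous φ := hf.continuous_iteratedDeriv ν (le_refl _)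
  have hφp : Function.Periodic φ (2 * π) := periodic_iteratedDeriv hp ν
  have hφtp : Function.Periodic (fun t => φ (t + h)) (2 * π) := by
    intro t
    simp only []
    rw [show t + 2 * π + h = (t + h) + 2 * π by ring, hφp (t + h)]
  set g : ℝ → ℂ := fun t => φ (t + h) - φ t with hgdef
  have hgc : Continuous g := (hφc.comp (by continuity)).sub hφc
  have hgp : Function.Periodic g (2 * π) := hφtp.sub hφp
  have hM0 : 0 ≤ M := le_trans (norm_nonneg (f 0)) (by simpa using hM 0 (Nat.zero_le ν) 0)
  -- coefficient formula for g
  have hcoefg : ∀ k : ℤ, fourierCoef1 g k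
      = (Complex.exp (Complex.I * k * h) - 1) * (Complex.I * k) ^ ν * fourierCoef1 f k := by
    intro k
    have hsub : fourierCoef1 g k
        = fourierCoef1 (fun t => φ (t + h)) k - fourierCoef1 φ k := by
      unfold fourierCoef1
      rw [← mul_sub, ← intervalIntegral.integral_sub
        (integrable_mul_expk (g := fun t => φ (t + h))
          (hφc.comp (continuous_id.add continuous_const)) (-Complex.I * k))
        (integrable_mul_expk (g := φ) hφc (-Complex.I * k))]
      congr 1
      apply intervalIntegral.integral_congr
      intro x _
      show (φ (x + h) - φ x) * _ = _
      ring
    rw [hsub, fourierCoef1_translate hφp h k,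
      fourierCoef1_iteratedDeriv hf hp k ν le_rfl]
    ring
  set S := (Finset.Icc (-(2 ^ n : ℤ)) (2 ^ n)).filter
      (fun k => 2 ^ (n - 1) ≤ |k| ∧ |k| < 2 ^ n) with hSdef
  set D : ℝ := 2 * (A / 2) ^ (2 * ν) with hDdef
  have hA2 : (0:ℝ) < A / 2 := by positivity
  have hD : 0 < D := by positivity
  -- L² bound on g from the Hölder condition
  have hgbound : ∀ t : ℝ, ‖g t‖ ^ 2 ≤ (M * h ^ α) ^ 2 := by
    intro t
    have h1 : ‖g t‖ ≤ M * h ^ α := by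
      have := hHol (t + h) t
      simpa [abs_of_pos hh] using this
    exact pow_le_pow_left₀ (norm_nonneg _) h1 2
  have hS : ∑ k ∈ S, ‖fourierCoef1 g k‖ ^ 2 ≤ (M * h ^ α) ^ 2 := by
    refine (bessel_ineq hgc hgp S).trans ?_
    have hint : (∫ t in (0:ℝ)..(2*π), ‖g t‖ ^ 2) ≤ (M * h ^ α) ^ 2 * (2 * π) := by
      have := intervalIntegral.integral_mono_on (a := 0) (b := 2*π)
        (by positivity)
        ((hgc.norm.pow 2).intervalIntegrable _ _) (intervalIntegrable_const (μ := volume))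
        (fun x _ => hgbound x)
      simpa [mul_comm] using this
    calc (1 / (2*π)) * ∫ t in (0:ℝ)..(2*π), ‖g t‖ ^ 2
        ≤ (1 / (2*π)) * ((M * h ^ α) ^ 2 * (2 * π)) :=
          mul_le_mul_of_nonneg_left hint (by positivity)
      _ = (M * h ^ α) ^ 2 := by field_simp
  -- pointwise lower bound on the coefficients of g
  have hptwise : ∀ k ∈ S, ‖fourierCoef1 f k‖ ^ 2 ≤ ‖fourierCoef1 g k‖ ^ 2 / D := by
    intro k hk
    obtain ⟨-, hk1, hk2⟩ := Finset.mem_filter.mp hk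
    set K : ℝ := |(k : ℝ)| with hKdef
    have hKlb : A / 2 ≤ K := by
      have : ((2 ^ (n-1) : ℤ) : ℝ) ≤ ((|k| : ℤ) : ℝ) := Int.cast_le.mpr hk1
      rw [Int.cast_abs] at this
      push_cast at this
      have hA2' : A / 2 = (2:ℝ) ^ (n - 1) := by
        have h2n : (2:ℝ) ^ n = 2 ^ (n-1) * 2 := by
          rw [← pow_succ]
          congr 1
          omega
        rw [hAdef, h2n]
        ring
      rw [hA2']
      exact this
    have hKub : K * h ≤ π := by
      have : ((|k| : ℤ) : ℝ) ≤ ((2 ^ n : ℤ) : ℝ) := Int.cast_le.mpr hk2.le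
      rw [Int.cast_abs] at this
      push_cast at this
      calc K * h ≤ A * h := mul_le_mul_of_nonneg_right this hh.le
        _ = π := by rw [hhdef]; field_simp
    have hKlb' : π / 2 ≤ K * h := by
      calc π / 2 = (A / 2) * h := by rw [hhdef]; field_simp
        _ ≤ K * h := mul_le_mul_of_nonneg_right hKlb hh.le
    have hElb : 2 ≤ ‖Complex.exp (Complex.I * k * h) - 1‖ ^ 2 := by
      have harg : Complex.I * k * h = (((k : ℝ) * h : ℝ) : ℂ) * Complex.I := by
        push_cast; ring
      rw [harg]
      apply exp_sub_one_sq_lb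
      · rwa [abs_mul, abs_of_pos hh]
      · rw [abs_mul, abs_of_pos hh]
        exact hKub.trans (by linarith [pi_pos])
    have hEsplit : ‖fourierCoef1 g k‖ ^ 2
        = ‖Complex.exp (Complex.I * k * h) - 1‖ ^ 2 * (K ^ ν) ^ 2
          * ‖fourierCoef1 f k‖ ^ 2 := by
      rw [hcoefg k, norm_mul, norm_mul, mul_pow, mul_pow, norm_pow]
      congr 3
      rw [norm_mul, Complex.norm_I, one_mul, Complex.norm_intCast]
    have hpow : ((A / 2) ^ ν) ^ 2 ≤ (K ^ ν) ^ 2 :=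
      pow_le_pow_left₀ (by positivity) (pow_le_pow_left₀ hA2.le hKlb ν) 2
    have hmain : D * ‖fourierCoef1 f k‖ ^ 2 ≤ ‖fourierCoef1 g k‖ ^ 2 := by
      rw [hEsplit, hDdef, mul_comm 2 ν, pow_mul]
      have h2 : 2 * ((A / 2) ^ ν) ^ 2
          ≤ ‖Complex.exp (Complex.I * k * h) - 1‖ ^ 2 * (K ^ ν) ^ 2 :=
        mul_le_mul hElb hpow (by positivity) (by positivity)
      exact mul_le_mul_of_nonneg_right h2 (by positivity)
    rw [le_div_iff₀ hD, mul_comm]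
    exact hmain
  -- combine
  have hfinal : ∑ k ∈ S, ‖fourierCoef1 f k‖ ^ 2 ≤ (M * h ^ α) ^ 2 / D := by
    calc ∑ k ∈ S, ‖fourierCoef1 f k‖ ^ 2
        ≤ ∑ k ∈ S, ‖fourierCoef1 g k‖ ^ 2 / D := Finset.sum_le_sum hptwise
      _ = (∑ k ∈ S, ‖fourierCoef1 g k‖ ^ 2) / D := by rw [← Finset.sum_div]
      _ ≤ (M * h ^ α) ^ 2 / D := by gcongr
  refine hfinal.trans (le_of_eq ?_)
  -- final arithmetic
  have hhα : h ^ α = π ^ α / A ^ α := by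
    rw [hhdef, Real.div_rpow pi_pos.le hA.le]
  have hAneg : A ^ (-(2 * ((ν:ℝ) + α))) = ((A ^ ν) ^ 2 * (A ^ α) ^ 2)⁻¹ := by
    rw [Real.rpow_neg hA.le]
    congr 1
    rw [show (2 * ((ν:ℝ) + α)) = ((ν:ℕ):ℝ) * 2 + α * 2 by push_cast; ring,
      Real.rpow_add hA, Real.rpow_mul hA.le, Real.rpow_mul hA.le,
      Real.rpow_natCast]
    norm_cast
  rw [hhα, hAneg, hDdef]
  have hπα : 0 < π ^ α := Real.rpow_pos_of_pos pi_pos α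
  have hAα : 0 < A ^ α := Real.rpow_pos_of_pos hA α
  have hAν : 0 < A ^ ν := by positivity
  rw [mul_comm 2 ν, pow_mul]
  field_simp
  have h12 : ((1:ℝ) / 2) ^ (ν * 2) * 2 ^ (ν * 2) = 1 := by rw [← mul_pow]; norm_num
  linear_combination (-(M ^ 2 * A ^ (ν * 2))) * h12
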